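/- Let λ > 1 and α > 0 with 2α > (3λ-1)/(λ-1). Define V(y) = 1 - e^{y(1+αy)}/λ + [2 - (1 - 1/λ)/(1 - e^{-y(1+αy)})] y(1+2αy) on (0, y_c), with y_c(1+αy_c) = ln λ. Then there exists a unique y_t ∈ (0, y_c) such that V < 0 on (0, y_t) and V > 0 on (y_t, y_c). -/

import Mathlib

open Real Set Filter

/-- Key inequality: `e^x (2 - x) < 2 + x` for `x > 0`. -/
lemma key_exp_ineq {x : ℝ} (hx : 0 < x) : Real.exp x * (2 - x) < 2 + x := by
  have hmono : StrictMonoOn (fun t : ℝ => (2 + t) * Real.exp (-t) + t) (Set.Ici 0) := by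
    apply strictMonoOn_of_deriv_pos (convex_Ici 0)
    · fun_prop
    · intro t ht
      rw [interior_Ici] at ht
      have hd : HasDerivAt (fun t : ℝ => (2 + t) * Real.exp (-t) + t)
          (1 * Real.exp (-t) + (2 + t) * (Real.exp (-t) * (-1)) + 1) t :=
        ((((hasDerivAt_id t).const_add 2).mul
          (((hasDerivAt_id t).neg).exp)).add (hasDerivAt_id t))
      rw [hd.deriv]
      have ht0 : t ≠ 0 := ne_of_gt ht
      have h1 : (-t) + 1 < Real.exp (-t) := Real.add_one_lt_exp (neg_ne_zero.mpr ht0)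
      have h2 : (t + 1) * Real.exp (-t) < 1 := by
        have := Real.add_one_lt_exp ht0
        have hp : 0 < Real.exp (-t) := Real.exp_pos _
        have hmul : Real.exp t * Real.exp (-t) = 1 := by
          rw [← Real.exp_add]; simp
        nlinarith
      nlinarith [Real.exp_pos (-t)]
  have hF : (2 + 0) * Real.exp (-0) + 0 < (2 + x) * Real.exp (-x) + x :=
    hmono (Set.self_mem_Ici) (Set.mem_Ici.mpr hx.le) hx
  have hmul : Real.exp x * Real.exp (-x) = 1 := by rw [← Real.exp_add]; simp
  have hp : 0 < Real.exp x := Real.exp_pos _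
  simp only [neg_zero, Real.exp_zero] at hF
  nlinarith [Real.exp_pos (-x)]

noncomputable def PhiF (lam α : ℝ) : ℝ → ℝ := fun y =>
  (lam + 1) * Real.exp (y * (1 + α * y)) * (1 + (y + 2 * α * y ^ 2)) -
    (Real.exp (y * (1 + α * y))) ^ 2 - lam - 2 * lam * (y + 2 * α * y ^ 2)

noncomputable def Phi'F (lam α : ℝ) : ℝ → ℝ := fun y =>
  (lam + 1) * ((1 + 2 * α * y) * Real.exp (y * (1 + α * y)) * (1 + (y + 2 * α * y ^ 2)) +
      Real.exp (y * (1 + α * y)) * (1 + 4 * α * y)) -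
    2 * (Real.exp (y * (1 + α * y))) ^ 2 * (1 + 2 * α * y) - 2 * lam * (1 + 4 * α * y)

lemma hasDerivAt_g (α y : ℝ) : HasDerivAt (fun y : ℝ => y * (1 + α * y)) (1 + 2 * α * y) y := by
  have h : HasDerivAt (fun y : ℝ => y * (1 + α * y)) (1 * (1 + α * y) + y * (α * 1)) y :=
    (hasDerivAt_id y).mul (((hasDerivAt_id y).const_mul α).const_add 1)
  convert h using 1; ring

lemma hasDerivAt_E (α y : ℝ) : HasDerivAt (fun y : ℝ => Real.exp (y * (1 + α * y)))
    (Real.exp (y * (1 + α * y)) * (1 + 2 * α * y)) y := (hasDerivAt_g α y).exp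

lemma hasDerivAt_h (α y : ℝ) : HasDerivAt (fun y : ℝ => y + 2 * α * y ^ 2) (1 + 4 * α * y) y := by
  have h : HasDerivAt (fun y : ℝ => y + 2 * α * y ^ 2)
      (1 + 2 * α * (↑2 * y ^ (2 - 1))) y :=
    (hasDerivAt_id y).add ((hasDerivAt_pow 2 y).const_mul (2 * α))
  convert h using 1; norm_num; ring

lemma hasDerivAt_PhiF (lam α y : ℝ) : HasDerivAt (PhiF lam α) (Phi'F lam α y) y := by
  have hE := hasDerivAt_E α y
  have hh := hasDerivAt_h α y
  have h1 : HasDerivAt (fun y : ℝ => (lam + 1) * Real.exp (y * (1 + α * y)) * (1 + (y + 2 * α * y ^ 2)))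
      ((Real.exp (y * (1 + α * y)) * (1 + 2 * α * y) * (lam + 1)) * (1 + (y + 2 * α * y ^ 2)) +
        ((lam + 1) * Real.exp (y * (1 + α * y))) * (1 + 4 * α * y)) y := by
    have := ((hE.const_mul (lam + 1)).mul (hh.const_add 1))
    refine this.congr_deriv ?_; ring
  have h2 : HasDerivAt (fun y : ℝ => (Real.exp (y * (1 + α * y))) ^ 2)
      (2 * Real.exp (y * (1 + α * y)) ^ 1 * (Real.exp (y * (1 + α * y)) * (1 + 2 * α * y))) y :=
    hE.pow 2
  have h3 : HasDerivAt (fun y : ℝ => 2 * lam * (y + 2 * α * y ^ 2)) (2 * lam * (1 + 4 * α * y)) y :=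
    hh.const_mul (2 * lam)
  have h4 : HasDerivAt (fun y : ℝ => lam + 2 * lam * (y + 2 * α * y ^ 2)) (2 * lam * (1 + 4 * α * y)) y :=
    h3.const_add lam
  have := (h1.sub h2).sub h4
  have heq : PhiF lam α = fun y : ℝ =>
      ((lam + 1) * Real.exp (y * (1 + α * y)) * (1 + (y + 2 * α * y ^ 2)) -
        (Real.exp (y * (1 + α * y))) ^ 2) - (lam + 2 * lam * (y + 2 * α * y ^ 2)) := by
    funext z; simp only [PhiF]; ring
  rw [heq]
  refine this.congr_deriv ?_
  simp only [Phi'F]; ring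

lemma PhiF_zero (lam α : ℝ) : PhiF lam α 0 = 0 := by simp [PhiF]

lemma Phi'F_zero (lam α : ℝ) : Phi'F lam α 0 = 0 := by simp [Phi'F]; ring

lemma hasDerivAt_Phi'F_zero (lam α : ℝ) :
    HasDerivAt (Phi'F lam α) (3 * lam - 1 - 2 * α * (lam - 1)) 0 := by
  have hE := hasDerivAt_E α 0
  have hh := hasDerivAt_h α 0
  have hp1 : HasDerivAt (fun y : ℝ => 1 + 2 * α * y) (2 * α) 0 := by
    have := ((hasDerivAt_id (0:ℝ)).const_mul (2*α)).const_add 1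
    refine this.congr_deriv ?_; ring
  have hp4 : HasDerivAt (fun y : ℝ => 1 + 4 * α * y) (4 * α) 0 := by
    have := ((hasDerivAt_id (0:ℝ)).const_mul (4*α)).const_add 1
    refine this.congr_deriv ?_; ring
  have hT1 := (((hp1.mul hE).mul (hh.const_add 1)).add (hE.mul hp4)).const_mul (lam + 1)
  have hT2 := ((hE.pow 2).mul hp1).const_mul 2
  have hT3 := hp4.const_mul (2 * lam)
  have h := (hT1.sub hT2).sub hT3
  have heq : (Phi'F lam α) = fun y : ℝ =>
      (lam + 1) * ((1 + 2 * α * y) * Real.exp (y * (1 + α * y)) * (1 + (y + 2 * α * y ^ 2)) +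
        Real.exp (y * (1 + α * y)) * (1 + 4 * α * y)) -
      2 * ((Real.exp (y * (1 + α * y))) ^ 2 * (1 + 2 * α * y)) - 2 * lam * (1 + 4 * α * y) := by
    funext z; simp only [Phi'F]; ring
  rw [heq]
  refine h.congr_deriv ?_
  norm_num
  ring

lemma R_pos {lam α y : ℝ} (hlam : 1 < lam) (hα : 0 < α) (hy : 0 < y)
    (hE : Real.exp (y * (1 + α * y)) < lam) :
    0 < y * Phi'F lam α y - 2 * PhiF lam α y := by
  set E := Real.exp (y * (1 + α * y)) with hEdef
  set x := y * (1 + α * y) with hxdef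
  have hx : 0 < x := by have : 0 < 1 + α * y := by nlinarith
                        exact mul_pos hy this
  have hE1 : 1 < E := by
    rw [hEdef, show (1:ℝ) = Real.exp 0 from (Real.exp_zero).symm]
    exact Real.exp_lt_exp.mpr hx
  have k1 : E * (2 - x) < 2 + x := key_exp_ineq hx
  have k2 : E * (1 - x) ≤ 1 := by
    have h1 : (-x) + 1 ≤ Real.exp (-x) := Real.add_one_le_exp _
    have hmul : E * Real.exp (-x) = 1 := by rw [hEdef, ← Real.exp_add]; simp
    nlinarith [Real.exp_pos (-x)]
  set h := y + 2 * α * y ^ 2 with hhdef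
  have hhx : h = x + α * y ^ 2 := by rw [hhdef, hxdef]; ring
  have hd : 0 < α * y ^ 2 := by positivity
  -- A > 0
  have e1 : 0 < (2 + x) - E * (2 - x) := by linarith
  have e2 : 0 ≤ x * (1 - E * (1 - x)) := mul_nonneg hx.le (by linarith)
  have e3 : 0 ≤ α * y ^ 2 * (E * (α * y ^ 2 + 2 * x + 2) - 2) := by
    have h2 : (2:ℝ) ≤ α * y ^ 2 + 2 * x + 2 := by nlinarith
    have : (2:ℝ) ≤ E * (α * y ^ 2 + 2 * x + 2) := by nlinarith
    exact mul_nonneg hd.le (by linarith)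
  have hA : 0 < E * (h ^ 2 + h - 2 - y) + 2 + 2 * y := by
    have hid : E * (h ^ 2 + h - 2 - y) + 2 + 2 * y =
        ((2 + x) - E * (2 - x)) + x * (1 - E * (1 - x)) +
          α * y ^ 2 * (E * (α * y ^ 2 + 2 * x + 2) - 2) := by
      rw [hhx, hxdef]; ring
    rw [hid]; linarith
  -- E·A + D > 0
  have hb : x ^ 2 ≤ h ^ 2 := by nlinarith
  have h2x : h + y = 2 * x := by rw [hhx, hxdef]; ring
  have hbr : 0 < E * (h ^ 2 - h - y) + h ^ 2 + h + y := by
    have : E * (h ^ 2 - h - y) + h ^ 2 + h + y = h ^ 2 * (1 + E) + 2 * x * (1 - E) := by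
      nlinarith [h2x]
    nlinarith [e1, hb, hx]
  have hEAD : 0 < E * (E * (h ^ 2 - h - y) + h ^ 2 + h + y) :=
    mul_pos (by positivity) hbr
  -- assemble
  have hiden : y * Phi'F lam α y - 2 * PhiF lam α y =
      (lam - E) * (E * (h ^ 2 + h - 2 - y) + 2 + 2 * y) +
        E * (E * (h ^ 2 - h - y) + h ^ 2 + h + y) := by
    simp only [Phi'F, PhiF, ← hEdef, ← hxdef, hhdef]
    ring
  rw [hiden]
  have : 0 < (lam - E) * (E * (h ^ 2 + h - 2 - y) + 2 + 2 * y) :=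
    mul_pos (by linarith) (by linarith)
  linarith

lemma continuous_PhiF (lam α : ℝ) : Continuous (PhiF lam α) := by
  unfold PhiF; fun_prop

lemma Q_strictMono {lam α yc : ℝ} (hlam : 1 < lam) (hα : 0 < α) (hyc : 0 < yc)
    (hyceq : yc * (1 + α * yc) = Real.log lam) :
    StrictMonoOn (fun y => PhiF lam α y / y ^ 2) (Set.Ioo 0 yc) := by
  apply strictMonoOn_of_deriv_pos (convex_Ioo 0 yc)
  · apply ContinuousOn.div ((continuous_PhiF lam α).continuousOn) (by fun_prop)
    intro x hx
    exact pow_ne_zero 2 (ne_of_gt hx.1)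
  · intro x hx
    rw [interior_Ioo] at hx
    obtain ⟨hx0, hxc⟩ := hx
    have hxne : x ^ 2 ≠ 0 := pow_ne_zero 2 (ne_of_gt hx0)
    have hd : HasDerivAt (fun y => PhiF lam α y / y ^ 2)
        ((Phi'F lam α x * x ^ 2 - PhiF lam α x * (↑2 * x ^ (2 - 1))) / (x ^ 2) ^ 2) x :=
      (hasDerivAt_PhiF lam α x).div (hasDerivAt_pow 2 x) hxne
    rw [hd.deriv]
    have hElt : Real.exp (x * (1 + α * x)) < lam := by
      have hmono : x * (1 + α * x) < yc * (1 + α * yc) := by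
        nlinarith [mul_pos (show (0:ℝ) < α * (yc + x) by positivity) (sub_pos.mpr hxc)]
      have := Real.exp_lt_exp.mpr (lt_of_lt_of_le hmono (le_of_eq hyceq))
      rwa [Real.exp_log (by linarith)] at this
    have hR := R_pos hlam hα hx0 hElt
    have hnum : Phi'F lam α x * x ^ 2 - PhiF lam α x * (↑2 * x ^ (2 - 1)) =
        x * (x * Phi'F lam α x - 2 * PhiF lam α x) := by norm_num; ring
    rw [hnum]
    positivity

lemma PhiF_yc_pos {lam α yc : ℝ} (hlam : 1 < lam) (hα : 0 < α) (hyc : 0 < yc)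
    (hyceq : yc * (1 + α * yc) = Real.log lam) : 0 < PhiF lam α yc := by
  have hEyc : Real.exp (yc * (1 + α * yc)) = lam := by
    rw [hyceq, Real.exp_log (by linarith)]
  simp only [PhiF, hEyc]
  nlinarith [mul_pos (mul_pos (show (0:ℝ) < lam by linarith) (show (0:ℝ) < lam - 1 by linarith))
    (show (0:ℝ) < yc + 2 * α * yc ^ 2 by positivity)]

lemma PhiF_neg_near_zero {lam α yc : ℝ} (hlam : 1 < lam) (hα : 0 < α)
    (hα2 : 2 * α > (3 * lam - 1) / (lam - 1)) (hyc : 0 < yc) :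
    ∃ y₁ ∈ Set.Ioo 0 yc, PhiF lam α y₁ < 0 := by
  have hc : 3 * lam - 1 - 2 * α * (lam - 1) < 0 := by
    have hl1 : 0 < lam - 1 := by linarith
    rw [gt_iff_lt, div_lt_iff₀ hl1] at hα2
    nlinarith
  -- slope of Phi'F at 0 tends to the (negative) second derivative
  have hT := (hasDerivAt_Phi'F_zero lam α)
  rw [hasDerivAt_iff_tendsto_slope] at hT
  have hneg : ∀ᶠ z in nhdsWithin 0 {(0:ℝ)}ᶜ, slope (Phi'F lam α) 0 z < 0 :=
    hT.eventually_lt_const hc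
  have hsub : nhdsWithin (0:ℝ) (Set.Ioi 0) ≤ nhdsWithin 0 {(0:ℝ)}ᶜ :=
    nhdsWithin_mono 0 (fun z hz => ne_of_gt hz)
  have hneg2 : ∀ᶠ z in nhdsWithin (0:ℝ) (Set.Ioi 0), Phi'F lam α z < 0 := by
    filter_upwards [hneg.filter_mono hsub, self_mem_nhdsWithin] with z hz hz0
    have hz0' : (0:ℝ) < z := hz0
    rw [slope_def_field, Phi'F_zero] at hz
    have : (Phi'F lam α z - 0) / (z - 0) < 0 := by
      simpa [div_eq_iff, sub_zero] using hz
    rw [sub_zero, sub_zero] at this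
    rcases div_neg_iff.mp this with ⟨_, h2⟩ | ⟨h1, _⟩
    · linarith
    · exact h1
  rw [eventually_nhdsWithin_iff] at hneg2
  obtain ⟨u, hu, hmem⟩ := Metric.eventually_nhds_iff.mp hneg2
  set y₁ := min u yc / 2 with hy₁
  have hy₁pos : 0 < y₁ := by positivity
  have hy₁u : y₁ < u := by
    have : min u yc ≤ u := min_le_left _ _
    linarith
  have hy₁yc : y₁ < yc := by
    have : min u yc ≤ yc := min_le_right _ _
    linarith
  refine ⟨y₁, ⟨hy₁pos, hy₁yc⟩, ?_⟩
  have hanti : StrictAntiOn (PhiF lam α) (Set.Icc 0 y₁) := by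
    apply strictAntiOn_of_deriv_neg (convex_Icc 0 y₁) ((continuous_PhiF lam α).continuousOn)
    intro z hz
    rw [interior_Icc] at hz
    rw [(hasDerivAt_PhiF lam α z).deriv]
    apply hmem
    · rw [Real.dist_eq, sub_zero, abs_of_pos hz.1]; linarith [hz.2]
    · exact hz.1
  have := hanti (Set.left_mem_Icc.mpr hy₁pos.le) (Set.right_mem_Icc.mpr hy₁pos.le) hy₁pos
  rwa [PhiF_zero] at this

lemma V_mul_eq_PhiF {lam α y : ℝ} (hlam : 1 < lam)
    (hE1 : 1 < Real.exp (y * (1 + α * y))) :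
    (1 - Real.exp (y * (1 + α * y)) / lam +
        (2 - (1 - 1 / lam) / (1 - Real.exp (-(y * (1 + α * y))))) *
          (y * (1 + 2 * α * y))) * (lam * (Real.exp (y * (1 + α * y)) - 1)) =
      PhiF lam α y := by
  have hlam0 : lam ≠ 0 := by linarith
  have hEpos : 0 < Real.exp (y * (1 + α * y)) := Real.exp_pos _
  have hEne : Real.exp (y * (1 + α * y)) ≠ 0 := ne_of_gt hEpos
  rw [Real.exp_neg]
  simp only [PhiF]
  set E := Real.exp (y * (1 + α * y)) with hEdef
  have hsub : E - 1 ≠ 0 := by linarith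
  have h1 : (1:ℝ) - E⁻¹ = (E - 1) / E := by field_simp
  rw [h1]
  field_simp
  ring

theorem V_sign_change (lam α yc : ℝ) (hlam : 1 < lam) (hα : 0 < α)
    (hα2 : 2 * α > (3 * lam - 1) / (lam - 1))
    (hyc : 0 < yc) (hyceq : yc * (1 + α * yc) = Real.log lam) :
    let V : ℝ → ℝ := fun y =>
      1 - Real.exp (y * (1 + α * y)) / lam +
        (2 - (1 - 1 / lam) / (1 - Real.exp (-(y * (1 + α * y))))) *
          (y * (1 + 2 * α * y))
    ∃! yt : ℝ, yt ∈ Set.Ioo 0 yc ∧ (∀ y ∈ Set.Ioo 0 yt, V y < 0) ∧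
      (∀ y ∈ Set.Ioo yt yc, 0 < V y) := by
  intro V
  have hVdef : ∀ y, V y = 1 - Real.exp (y * (1 + α * y)) / lam +
      (2 - (1 - 1 / lam) / (1 - Real.exp (-(y * (1 + α * y))))) *
        (y * (1 + 2 * α * y)) := fun _ => rfl
  -- basic facts on (0, yc)
  have hE1 : ∀ y ∈ Set.Ioo 0 yc, 1 < Real.exp (y * (1 + α * y)) := by
    intro y hy
    have hx : 0 < y * (1 + α * y) := by
      have : 0 < 1 + α * y := by nlinarith [hy.1]
      exact mul_pos hy.1 this
    linarith [Real.add_one_le_exp (y * (1 + α * y))]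
  -- sign of V determined by sign of PhiF
  have hVsign : ∀ y ∈ Set.Ioo 0 yc,
      (PhiF lam α y < 0 → V y < 0) ∧ (0 < PhiF lam α y → 0 < V y) := by
    intro y hy
    have hE := hE1 y hy
    have hp : 0 < lam * (Real.exp (y * (1 + α * y)) - 1) := by
      have : 0 < lam := by linarith
      nlinarith
    have hid := V_mul_eq_PhiF (α := α) (y := y) hlam hE
    rw [← hVdef y] at hid
    constructor
    · intro hPhi
      nlinarith [hid, hp]
    · intro hPhi
      nlinarith [hid, hp]
  have hQ := Q_strictMono hlam hα hyc hyceq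
  obtain ⟨y₁, hy₁mem, hy₁neg⟩ := PhiF_neg_near_zero hlam hα hα2 hyc
  set N := {y : ℝ | y ∈ Set.Ioo 0 yc ∧ PhiF lam α y < 0} with hNdef
  have hNne : N.Nonempty := ⟨y₁, hy₁mem, hy₁neg⟩
  have hNbdd : BddAbove N := ⟨yc, fun z hz => hz.1.2.le⟩
  set yt := sSup N with hytdef
  have hytpos : 0 < yt := lt_of_lt_of_le hy₁mem.1 (le_csSup hNbdd ⟨hy₁mem, hy₁neg⟩)
  -- yt < yc
  have hPyc := PhiF_yc_pos hlam hα hyc hyceq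
  have hev : ∀ᶠ z in nhds yc, 0 < PhiF lam α z :=
    ((continuous_PhiF lam α).continuousAt).eventually (eventually_gt_nhds hPyc)
  obtain ⟨δ, hδpos, hδ⟩ := Metric.eventually_nhds_iff.mp hev
  have hub : ∀ z ∈ N, z ≤ yc - δ := by
    intro z hz
    by_contra hcon
    push_neg at hcon
    have hdist : dist z yc < δ := by
      rw [Real.dist_eq, abs_lt]
      constructor <;> [linarith; linarith [hz.1.2]]
    linarith [hδ hdist, hz.2]
  have hytlt : yt < yc := lt_of_le_of_lt (csSup_le hNne hub) (by linarith)
  -- negativity on (0, yt)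
  have hneg : ∀ y ∈ Set.Ioo 0 yt, V y < 0 := by
    intro y hy
    obtain ⟨z, hzN, hyz⟩ := exists_lt_of_lt_csSup hNne hy.2
    have hyIoo : y ∈ Set.Ioo 0 yc := ⟨hy.1, lt_trans hyz hzN.1.2⟩
    have hQlt := hQ hyIoo hzN.1 hyz
    have hz2 : (0:ℝ) < z ^ 2 := pow_pos hzN.1.1 2
    have hQz : PhiF lam α z / z ^ 2 < 0 := div_neg_of_neg_of_pos hzN.2 hz2
    have hQy : PhiF lam α y / y ^ 2 < 0 := lt_trans hQlt hQz
    have hy2 : (0:ℝ) < y ^ 2 := pow_pos hy.1 2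
    have hPhiy : PhiF lam α y < 0 := by
      by_contra hcon
      push_neg at hcon
      exact absurd hQy (not_lt.mpr (div_nonneg hcon hy2.le))
    exact (hVsign y hyIoo).1 hPhiy
  -- positivity on (yt, yc)
  have hpos : ∀ y ∈ Set.Ioo yt yc, 0 < V y := by
    intro y hy
    set w := (yt + y) / 2 with hwdef
    have hw1 : yt < w := by rw [hwdef]; linarith [hy.1]
    have hw2 : w < y := by rw [hwdef]; linarith [hy.1]
    have hwIoo : w ∈ Set.Ioo 0 yc := ⟨by linarith, by linarith [hy.2]⟩
    have hwnotN : w ∉ N := fun hwN => absurd (le_csSup hNbdd hwN) (not_le.mpr hw1)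
    have hPw : 0 ≤ PhiF lam α w := by
      by_contra hcon
      push_neg at hcon
      exact hwnotN ⟨hwIoo, hcon⟩
    have hyIoo : y ∈ Set.Ioo 0 yc := ⟨by linarith [hwIoo.1], hy.2⟩
    have hQlt := hQ hwIoo hyIoo hw2
    have hw2pos : (0:ℝ) < w ^ 2 := pow_pos hwIoo.1 2
    have hQy : 0 < PhiF lam α y / y ^ 2 :=
      lt_of_le_of_lt (div_nonneg hPw hw2pos.le) hQlt
    have hy2 : (0:ℝ) < y ^ 2 := pow_pos hyIoo.1 2
    have hPhiy : 0 < PhiF lam α y := by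
      by_contra hcon
      push_neg at hcon
      have : PhiF lam α y / y ^ 2 ≤ 0 := div_nonpos_of_nonpos_of_nonneg hcon hy2.le
      linarith
    exact (hVsign y hyIoo).2 hPhiy
  refine ⟨yt, ⟨⟨hytpos, hytlt⟩, hneg, hpos⟩, ?_⟩
  rintro b ⟨hbmem, hbneg, hbpos⟩
  rcases lt_trichotomy b yt with hlt | heq | hgt
  · exfalso
    set m := (b + yt) / 2 with hmdef
    have h1 : b < m := by rw [hmdef]; linarith
    have h2 : m < yt := by rw [hmdef]; linarith
    have hVpos : 0 < V m := hbpos m ⟨h1, by linarith⟩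
    have hVneg : V m < 0 := hneg m ⟨by linarith [hbmem.1], h2⟩
    linarith
  · exact heq
  · exfalso
    set m := (yt + b) / 2 with hmdef
    have h1 : yt < m := by rw [hmdef]; linarith
    have h2 : m < b := by rw [hmdef]; linarith
    have hVneg : V m < 0 := hbneg m ⟨by linarith, h2⟩
    have hVpos : 0 < V m := hpos m ⟨h1, by linarith [hbmem.2]⟩
    linarith
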